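/- (Quasi-optimal column subset selection, Corollary 2.4 in existence form.) Let A ∈ ℝ^{m×n} and let r be a positive integer with r ≤ min(m,n). Then there exist distinct indices j_1,…,j_r ∈ {1,…,n} and a matrix C ∈ ℝ^{r×n} such that for every matrix B ∈ ℝ^{m×n} of rank at most r, ‖A − A E_J C‖_F² ≤ (r+1) · ‖A − B‖_F². In particular, the error of approximating A from its r selected columns is within a factor r+1 (in squared Frobenius norm) of the best rank-r approximation error σ_{r+1}²(A) + ⋯ + σ_n²(A). -/

import Mathlib

open Matrix BigOperators

/-- One step of the ARP recursion: project out the `i`-th row of `W`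
(convention: leave `W` unchanged if that row is zero). -/
noncomputable def arpStep {n r : ℕ} (W : Matrix (Fin n) (Fin r) ℝ) (i : Fin n) :
    Matrix (Fin n) (Fin r) ℝ :=
  if W i = 0 then W
  else W * (1 - (∑ l, (W i l) ^ 2)⁻¹ • Matrix.of fun a b => W i a * W i b)

/-- The ARP iterates `V_k`. -/
noncomputable def arpIter {n r : ℕ} (V : Matrix (Fin n) (Fin r) ℝ) (j : Fin r → Fin n) :
    ℕ → Matrix (Fin n) (Fin r) ℝ
  | 0 => V
  | k + 1 => if h : k < r then arpStep (arpIter V j k) (j ⟨k, h⟩) else arpIter V j k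

/-- The ARP weight `w(j) = ∏_{k=1}^r ‖v_k‖²/(r-k+1)`. -/
noncomputable def arpWeight {n r : ℕ} (V : Matrix (Fin n) (Fin r) ℝ) (j : Fin r → Fin n) : ℝ :=
  ∏ k : Fin r, (∑ l, (arpIter V j k.val (j k) l) ^ 2) / ((r : ℝ) - (k.val : ℝ))

/-- The matrix `E_J` whose `k`-th column is the `j_k`-th standard basis vector of ℝⁿ. -/
def EJ {n k : ℕ} (j : Fin k → Fin n) : Matrix (Fin n) (Fin k) ℝ :=
  Matrix.of fun i l => if i = j l then 1 else 0

/-- Squared Frobenius norm. -/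
def frobSq {m n : ℕ} (A : Matrix (Fin m) (Fin n) ℝ) : ℝ := ∑ i, ∑ j, (A i j) ^ 2

open Finset

variable {n r : ℕ}

lemma cbStar (V U : Matrix (Fin n) (Fin r) ℝ) :
    det (Vᵀ * U) = ∑ g : Fin r → Fin n, det (V.submatrix g id) * ∏ k, U (g k) k := by
  rw [Matrix.det_apply']
  have h1 : ∀ σ : Equiv.Perm (Fin r),
      (∏ i, (Vᵀ * U) (σ i) i) = ∑ g : Fin r → Fin n, ∏ i, (V (g i) (σ i) * U (g i) i) := by
    intro σ
    simp_rw [Matrix.mul_apply, Matrix.transpose_apply]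
    rw [Finset.prod_univ_sum (fun _ : Fin r => (univ : Finset (Fin n))) (fun i t => V t (σ i) * U t i)]
    rw [← Fintype.piFinset_univ]
  simp_rw [h1, Finset.mul_sum]
  rw [Finset.sum_comm]
  refine Finset.sum_congr rfl fun g _ => ?_
  have h2 : det (V.submatrix g id) = ∑ σ : Equiv.Perm (Fin r), Equiv.Perm.sign σ * ∏ i, V (g i) (σ i) := by
    rw [← Matrix.det_transpose, Matrix.det_apply']
    simp [Matrix.transpose_apply]
  rw [h2, Finset.sum_mul]
  refine Finset.sum_congr rfl fun σ _ => ?_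
  rw [Finset.prod_mul_distrib]
  ring

lemma cbOrdered (V U : Matrix (Fin n) (Fin r) ℝ) :
    ∑ g : Fin r → Fin n, det (V.submatrix g id) * det (U.submatrix g id)
      = (r.factorial : ℝ) * det (Vᵀ * U) := by
  have expand : ∀ g : Fin r → Fin n, det (V.submatrix g id)
      = ∑ σ : Equiv.Perm (Fin r), (Equiv.Perm.sign σ : ℤ) * ∏ k, V (g (σ k)) k := by
    intro g; rw [Matrix.det_apply']; rfl
  simp_rw [expand, Finset.sum_mul]
  rw [Finset.sum_comm]
  have step : ∀ σ : Equiv.Perm (Fin r),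
      (∑ g : Fin r → Fin n, ((Equiv.Perm.sign σ : ℤ) : ℝ) * (∏ k, V (g (σ k)) k) * det (U.submatrix g id))
      = ∑ h : Fin r → Fin n, (∏ k, V (h k) k) * det (U.submatrix h id) := by
    intro σ
    have hbij : Function.Bijective (fun h : Fin r → Fin n => h ∘ ⇑σ⁻¹) := by
      constructor
      · intro a b hab
        funext k
        have := congrFun hab (σ k)
        simpa using this
      · intro a
        exact ⟨a ∘ ⇑σ, by funext k; simp⟩
    have hsgn : ((Equiv.Perm.sign σ : ℤ) : ℝ) * ((Equiv.Perm.sign σ : ℤ) : ℝ) = 1 := by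
      rw [← Int.cast_mul, ← Units.val_mul, Int.units_mul_self]
      simp
    refine (Fintype.sum_bijective _ hbij _ _ (fun h => ?_)).symm
    have hperm : det (U.submatrix (h ∘ ⇑σ⁻¹) id) = ((Equiv.Perm.sign σ : ℤ) : ℝ) * det (U.submatrix h id) := by
      have heq : U.submatrix (h ∘ ⇑σ⁻¹) id = (U.submatrix h id).submatrix ⇑σ⁻¹ id := by
        ext a b
        simp [Matrix.submatrix_apply]
      rw [heq, Matrix.det_permute, Equiv.Perm.sign_inv]
    have hprod : (∏ k, V ((h ∘ ⇑σ⁻¹) (σ k)) k) = ∏ k, V (h k) k := by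
      refine Finset.prod_congr rfl fun k _ => ?_
      simp
    rw [hprod, hperm]
    linear_combination (-(∏ k, V (h k) k) * (U.submatrix h id).det) * hsgn
  simp_rw [step]
  rw [Finset.sum_const, Finset.card_univ, Fintype.card_perm, Fintype.card_fin, nsmul_eq_mul]
  congr 1
  have : det (Vᵀ * U) = det (Uᵀ * V) := by
    rw [← Matrix.det_transpose (Uᵀ * V), Matrix.transpose_mul, Matrix.transpose_transpose]
  rw [this, cbStar]
  exact Finset.sum_congr rfl fun h _ => mul_comm _ _

lemma frobSq_nonneg {m n : ℕ} (A : Matrix (Fin m) (Fin n) ℝ) : 0 ≤ frobSq A :=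
  Finset.sum_nonneg fun i _ => Finset.sum_nonneg fun j _ => sq_nonneg _

lemma frobSq_eq_trace {m n : ℕ} (A : Matrix (Fin m) (Fin n) ℝ) :
    frobSq A = Matrix.trace (Aᵀ * A) := by
  unfold frobSq
  rw [Matrix.trace, Finset.sum_comm]
  refine Finset.sum_congr rfl fun i _ => ?_
  simp [Matrix.diag, Matrix.mul_apply, sq]

lemma key_pyth {m n r : ℕ} (E : Matrix (Fin m) (Fin n) ℝ) (F : Matrix (Fin m) (Fin r) ℝ)
    (V : Matrix (Fin n) (Fin r) ℝ) (hEV : E * V = 0) (hV : Vᵀ * V = 1) :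
    frobSq (E - F * Vᵀ) = frobSq E + frobSq F := by
  rw [frobSq_eq_trace, frobSq_eq_trace, frobSq_eq_trace]
  have expand : (E - F * Vᵀ)ᵀ * (E - F * Vᵀ)
      = Eᵀ * E - (F * Vᵀ)ᵀ * E - Eᵀ * (F * Vᵀ) + (F * Vᵀ)ᵀ * (F * Vᵀ) := by
    rw [Matrix.transpose_sub, Matrix.sub_mul, Matrix.mul_sub, Matrix.mul_sub]
    abel
  rw [expand]
  have h1 : Matrix.trace ((F * Vᵀ)ᵀ * E) = 0 := by
    rw [Matrix.transpose_mul, Matrix.transpose_transpose, Matrix.mul_assoc,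
      Matrix.trace_mul_comm, Matrix.mul_assoc, hEV, Matrix.mul_zero, Matrix.trace_zero]
  have h2 : Matrix.trace (Eᵀ * (F * Vᵀ)) = 0 := by
    rw [← Matrix.trace_transpose, Matrix.transpose_mul, Matrix.transpose_transpose,
      Matrix.transpose_mul, Matrix.transpose_transpose, Matrix.mul_assoc,
      Matrix.trace_mul_comm, Matrix.mul_assoc, hEV, Matrix.mul_zero, Matrix.trace_zero]
  have h3 : Matrix.trace ((F * Vᵀ)ᵀ * (F * Vᵀ)) = Matrix.trace (Fᵀ * F) := by
    rw [Matrix.transpose_mul, Matrix.transpose_transpose]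
    calc Matrix.trace (Vᵀᵀ * Fᵀ * (F * Vᵀ)) = Matrix.trace ((V * (Fᵀ * F)) * Vᵀ) := by
          rw [Matrix.transpose_transpose]; rw [Matrix.mul_assoc, Matrix.mul_assoc, Matrix.mul_assoc]
      _ = Matrix.trace (Vᵀ * (V * (Fᵀ * F))) := by rw [Matrix.trace_mul_comm]
      _ = Matrix.trace ((Fᵀ * F) * (Vᵀ * V)) := by
          rw [← Matrix.mul_assoc, Matrix.trace_mul_comm]
      _ = Matrix.trace (Fᵀ * F) := by rw [hV, Matrix.mul_one]
  rw [Matrix.trace_add, Matrix.trace_sub, Matrix.trace_sub, h1, h2, h3]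
  ring

lemma trace_proj {m n : ℕ} (X : Matrix (Fin m) (Fin n) ℝ) (R : Matrix (Fin n) (Fin n) ℝ)
    (hRt : Rᵀ = R) (hRR : R * R = R) :
    Matrix.trace ((X * R)ᵀ * (X * R)) = Matrix.trace (Xᵀ * X * R) := by
  rw [Matrix.transpose_mul, hRt]
  simp only [Matrix.mul_assoc]
  rw [Matrix.trace_mul_comm]
  simp only [Matrix.mul_assoc]
  rw [hRR]

lemma proj_contract {m n : ℕ} (M : Matrix (Fin m) (Fin n) ℝ) (Q : Matrix (Fin n) (Fin n) ℝ)
    (hQt : Qᵀ = Q) (hQQ : Q * Q = Q) : frobSq (M * Q) ≤ frobSq M := by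
  have h1t : (1 - Q)ᵀ = 1 - Q := by rw [Matrix.transpose_sub, Matrix.transpose_one, hQt]
  have h11 : (1 - Q) * (1 - Q) = 1 - Q := by
    simp [Matrix.mul_sub, Matrix.sub_mul, hQQ]
  have hMQ : M - M * Q = M * (1 - Q) := by rw [Matrix.mul_sub, Matrix.mul_one]
  have key : frobSq M = frobSq (M * Q) + frobSq (M - M * Q) := by
    rw [frobSq_eq_trace, frobSq_eq_trace, frobSq_eq_trace, hMQ,
      trace_proj M Q hQt hQQ, trace_proj M (1 - Q) h1t h11,
      Matrix.mul_sub, Matrix.mul_one, Matrix.trace_sub]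
    ring
  have := frobSq_nonneg (M - M * Q)
  linarith

lemma mul_EJ {m n k : ℕ} (X : Matrix (Fin m) (Fin n) ℝ) (g : Fin k → Fin n) (i : Fin m) (l : Fin k) :
    (X * EJ g) i l = X i (g l) := by
  simp only [Matrix.mul_apply, EJ, Matrix.of_apply, mul_ite, mul_one, mul_zero]
  rw [Finset.sum_ite_eq' Finset.univ (g l) (fun t => X i t)]
  simp

lemma transpose_mul_EJ {n r k : ℕ} (V : Matrix (Fin n) (Fin r) ℝ) (g : Fin k → Fin n) :
    Vᵀ * EJ g = (V.submatrix g id)ᵀ := by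
  ext l k'
  rw [mul_EJ Vᵀ g l k']
  simp

lemma updateCol_submatrix {n r : ℕ} (V : Matrix (Fin n) (Fin r) ℝ) (g : Fin r → Fin n)
    (c : Fin r) (x : Fin n → ℝ) :
    (V.submatrix g id).updateCol c (fun k => x (g k)) = (V.updateCol c x).submatrix g id := by
  ext a b
  simp [Matrix.updateCol_apply, Matrix.submatrix_apply]

lemma det_gram_update {n r m : ℕ} (V : Matrix (Fin n) (Fin r) ℝ) (hV : Vᵀ * V = 1)
    (E : Matrix (Fin m) (Fin n) ℝ) (hEV : E * V = 0) (i : Fin m) (c : Fin r) :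
    det ((V.updateCol c (E i))ᵀ * (V.updateCol c (E i))) = ∑ t, (E i t) ^ 2 := by
  set U := V.updateCol c (E i) with hU
  have hdiag : Uᵀ * U = Matrix.diagonal (fun a => if a = c then ∑ t, (E i t) ^ 2 else 1) := by
    ext a b
    have hab : (Uᵀ * U) a b = ∑ t, U t a * U t b := by simp [Matrix.mul_apply]
    have hVV : ∀ a' b' : Fin r, (∑ t, V t a' * V t b') = if a' = b' then (1:ℝ) else 0 := by
      intro a' b'
      have := congrFun (congrFun hV a') b'
      simpa [Matrix.mul_apply, Matrix.one_apply] using this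
    have hEVc : ∀ a' : Fin r, (∑ t, E i t * V t a') = 0 := by
      intro a'
      have := congrFun (congrFun hEV i) a'
      simpa [Matrix.mul_apply] using this
    have hUa : ∀ (t : Fin n) (a' : Fin r), U t a' = if a' = c then E i t else V t a' := by
      intro t a'
      simp [hU, Matrix.updateCol_apply]
    rw [hab]
    simp only [hUa]
    rcases eq_or_ne a c with hac | hac <;> rcases eq_or_ne b c with hbc | hbc
    · have hab2 : a = b := hac.trans hbc.symm
      subst hab2
      rw [Matrix.diagonal_apply_eq, if_pos hac]
      simp only [if_pos hac]
      exact Finset.sum_congr rfl fun t _ => (pow_two (E i t)).symm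
    · rw [Matrix.diagonal_apply_ne _ (fun h : a = b => hbc (h ▸ hac))]
      simp only [if_pos hac, if_neg hbc]
      exact hEVc b
    · rw [Matrix.diagonal_apply_ne _ (fun h : a = b => hac (h.symm ▸ hbc))]
      simp only [if_pos hbc, if_neg hac]
      calc (∑ t, V t a * E i t) = ∑ t, E i t * V t a :=
            Finset.sum_congr rfl fun t _ => mul_comm _ _
        _ = 0 := hEVc a
    · simp only [if_neg hac, if_neg hbc, Matrix.diagonal_apply]
      rw [hVV a b]
  rw [hdiag, Matrix.det_diagonal]
  rw [Finset.prod_eq_single c (fun b _ hb => if_neg hb) (fun h => absurd (Finset.mem_univ c) h)]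
  simp

lemma cramer_F {n r m : ℕ} (V : Matrix (Fin n) (Fin r) ℝ) (g : Fin r → Fin n)
    (hdet : det (V.submatrix g id) ≠ 0) (E : Matrix (Fin m) (Fin n) ℝ) (i : Fin m) (c : Fin r) :
    det (V.submatrix g id) * (E * EJ g * ((V.submatrix g id)ᵀ)⁻¹) i c
      = det ((V.updateCol c (E i)).submatrix g id) := by
  set M := V.submatrix g id with hM
  have h1 : (E * EJ g * (Mᵀ)⁻¹) i c = (M⁻¹.mulVec (fun k => E i (g k))) c := by
    rw [Matrix.mul_apply, ← Matrix.transpose_nonsing_inv]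
    simp only [Matrix.transpose_apply]
    rw [Matrix.mulVec, dotProduct]
    refine Finset.sum_congr rfl fun k _ => ?_
    rw [mul_EJ E g i k, mul_comm]
  rw [h1, Matrix.inv_def, Matrix.smul_mulVec, Pi.smul_apply, smul_eq_mul,
    Ring.inverse_eq_inv', ← mul_assoc, mul_inv_cancel₀ hdet, one_mul,
    ← Matrix.cramer_eq_adjugate_mulVec, Matrix.cramer_apply, updateCol_submatrix]

lemma core_selection {n r m : ℕ} (V : Matrix (Fin n) (Fin r) ℝ) (hV : Vᵀ * V = 1)
    (E : Matrix (Fin m) (Fin n) ℝ) (hEV : E * V = 0) :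
    ∃ g : Fin r → Fin n, det (V.submatrix g id) ≠ 0 ∧
      frobSq (E * EJ g * ((V.submatrix g id)ᵀ)⁻¹) ≤ (r : ℝ) * frobSq E := by
  classical
  set w : (Fin r → Fin n) → ℝ := fun g => det (V.submatrix g id) * det (V.submatrix g id) with hw
  set F : (Fin r → Fin n) → Matrix (Fin m) (Fin r) ℝ :=
    fun g => E * EJ g * ((V.submatrix g id)ᵀ)⁻¹ with hF
  set S : Finset (Fin r → Fin n) :=
    Finset.univ.filter (fun g => det (V.submatrix g id) ≠ 0) with hS
  have hwsum : ∑ g ∈ S, w g = (r.factorial : ℝ) := by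
    have h0 : ∑ g : Fin r → Fin n, w g = (r.factorial : ℝ) := by
      rw [hw, cbOrdered V V, hV, Matrix.det_one, mul_one]
    rw [← h0]
    refine Finset.sum_subset (Finset.filter_subset _ _) fun g _ hg => ?_
    have : det (V.submatrix g id) = 0 := by
      by_contra hne
      exact hg (Finset.mem_filter.mpr ⟨Finset.mem_univ g, hne⟩)
    simp [hw, this]
  have hident : ∀ g ∈ S, w g * frobSq (F g)
      = ∑ i, ∑ c, det ((V.updateCol c (E i)).submatrix g id) ^ 2 := by
    intro g hg
    have hdet : det (V.submatrix g id) ≠ 0 := (Finset.mem_filter.mp hg).2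
    rw [hw]
    unfold frobSq
    rw [Finset.mul_sum]
    refine Finset.sum_congr rfl fun i _ => ?_
    rw [Finset.mul_sum]
    refine Finset.sum_congr rfl fun c _ => ?_
    rw [← cramer_F V g hdet E i c]
    ring
  have hbound : ∑ g ∈ S, w g * frobSq (F g) ≤ (r.factorial : ℝ) * ((r : ℝ) * frobSq E) := by
    calc ∑ g ∈ S, w g * frobSq (F g)
        = ∑ g ∈ S, ∑ i, ∑ c, det ((V.updateCol c (E i)).submatrix g id) ^ 2 :=
          Finset.sum_congr rfl hident
      _ ≤ ∑ g : Fin r → Fin n, ∑ i, ∑ c, det ((V.updateCol c (E i)).submatrix g id) ^ 2 := by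
          refine Finset.sum_le_sum_of_subset_of_nonneg (Finset.filter_subset _ _) ?_
          intro g _ _
          exact Finset.sum_nonneg fun i _ => Finset.sum_nonneg fun c _ => sq_nonneg _
      _ = ∑ i, ∑ c, ∑ g : Fin r → Fin n, det ((V.updateCol c (E i)).submatrix g id) ^ 2 := by
          rw [Finset.sum_comm]
          exact Finset.sum_congr rfl fun i _ => Finset.sum_comm
      _ = ∑ i, ∑ c : Fin r, ((r.factorial : ℝ) * ∑ t, (E i t) ^ 2) := by
          refine Finset.sum_congr rfl fun i _ => Finset.sum_congr rfl fun c _ => ?_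
          have hcb := cbOrdered (V.updateCol c (E i)) (V.updateCol c (E i))
          have hgram := det_gram_update V hV E hEV i c
          rw [hgram] at hcb
          rw [← hcb]
          exact Finset.sum_congr rfl fun g _ => pow_two _
      _ = (r.factorial : ℝ) * ((r : ℝ) * frobSq E) := by
          unfold frobSq
          rw [Finset.sum_comm]
          simp [Finset.sum_const, Finset.mul_sum]
          exact Finset.sum_congr rfl fun i _ => Finset.sum_congr rfl fun t _ => by ring
  have hSne : S.Nonempty := by
    by_contra h
    rw [Finset.not_nonempty_iff_eq_empty] at h
    rw [h, Finset.sum_empty] at hwsum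
    have hfac : (0:ℝ) < (r.factorial : ℝ) := by exact_mod_cast Nat.factorial_pos r
    linarith
  by_contra hcon
  push_neg at hcon
  have hlt : ∀ g ∈ S, w g * ((r : ℝ) * frobSq E) < w g * frobSq (F g) := by
    intro g hg
    have hdet := (Finset.mem_filter.mp hg).2
    have hwpos : 0 < w g := mul_self_pos.mpr hdet
    exact mul_lt_mul_of_pos_left (hcon g hdet) hwpos
  have hstrict : ∑ g ∈ S, w g * ((r : ℝ) * frobSq E) < ∑ g ∈ S, w g * frobSq (F g) :=
    Finset.sum_lt_sum_of_nonempty hSne hlt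
  rw [← Finset.sum_mul, hwsum] at hstrict
  linarith

lemma column_select {m n r : ℕ} (A : Matrix (Fin m) (Fin n) ℝ) (V : Matrix (Fin n) (Fin r) ℝ)
    (hV : Vᵀ * V = 1) :
    ∃ g : Fin r → Fin n, Function.Injective g ∧ ∃ C : Matrix (Fin r) (Fin n) ℝ,
      frobSq (A - A * EJ g * C) ≤ ((r : ℝ) + 1) * frobSq (A - A * (V * Vᵀ)) := by
  set E := A - A * (V * Vᵀ) with hE
  have hEV : E * V = 0 := by
    rw [hE, Matrix.sub_mul]
    rw [Matrix.mul_assoc A (V * Vᵀ) V, Matrix.mul_assoc V Vᵀ V, hV, Matrix.mul_one, sub_self]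
  obtain ⟨g, hdet, hle⟩ := core_selection V hV E hEV
  have hinj : Function.Injective g := by
    intro a b hab
    by_contra hne
    apply hdet
    apply Matrix.det_zero_of_row_eq hne
    funext l
    simp [Matrix.submatrix_apply, hab]
  set M := V.submatrix g id with hM
  have hMdet : IsUnit (Mᵀ).det := by
    rw [Matrix.det_transpose]
    exact isUnit_iff_ne_zero.mpr hdet
  refine ⟨g, hinj, (Mᵀ)⁻¹ * Vᵀ, ?_⟩
  have hsplit : A * EJ g = E * EJ g + A * (V * Vᵀ) * EJ g := by
    rw [hE, Matrix.sub_mul]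
    abel
  have hT : A * (V * Vᵀ) * EJ g * ((Mᵀ)⁻¹ * Vᵀ) = A * (V * Vᵀ) := by
    rw [← Matrix.mul_assoc A V Vᵀ, Matrix.mul_assoc (A * V) Vᵀ (EJ g),
      transpose_mul_EJ V g, ← hM]
    rw [Matrix.mul_assoc (A * V) Mᵀ ((Mᵀ)⁻¹ * Vᵀ), ← Matrix.mul_assoc Mᵀ (Mᵀ)⁻¹ Vᵀ,
      Matrix.mul_nonsing_inv _ hMdet, Matrix.one_mul, Matrix.mul_assoc]
  have key : A - A * EJ g * ((Mᵀ)⁻¹ * Vᵀ) = E - (E * EJ g * (Mᵀ)⁻¹) * Vᵀ := by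
    rw [hsplit, Matrix.add_mul, hT]
    rw [Matrix.mul_assoc (E * EJ g) (Mᵀ)⁻¹ Vᵀ]
    rw [hE]
    abel
  rw [key, key_pyth E (E * EJ g * (Mᵀ)⁻¹) V hEV hV]
  have h0 := frobSq_nonneg E
  linarith

lemma span_proj {E' : Type*} [NormedAddCommGroup E'] [InnerProductSpace ℝ E'] {r : ℕ}
    (v : Fin r → E') (hv : Orthonormal ℝ v) (x : E') (hx : x ∈ Submodule.span ℝ (Set.range v)) :
    ∑ k, (inner ℝ (v k) x : ℝ) • v k = x := by
  induction hx using Submodule.span_induction with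
  | mem y hy =>
    obtain ⟨j, rfl⟩ := hy
    have hij := orthonormal_iff_ite.mp hv
    calc ∑ k, (inner ℝ (v k) (v j) : ℝ) • v k
        = ∑ k, (if k = j then (1:ℝ) else 0) • v k := by
          refine Finset.sum_congr rfl fun k _ => ?_
          rw [hij k j]
      _ = v j := by simp
  | zero => simp
  | add y z _ _ hy hz =>
    have hterm : ∀ k : Fin r, (inner ℝ (v k) (y + z) : ℝ) • v k
        = (inner ℝ (v k) y : ℝ) • v k + (inner ℝ (v k) z : ℝ) • v k := by
      intro k; rw [inner_add_right, add_smul]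
    rw [Finset.sum_congr rfl fun k _ => hterm k, Finset.sum_add_distrib, hy, hz]
  | smul a y _ hy =>
    have hterm : ∀ k : Fin r, (inner ℝ (v k) (a • y) : ℝ) • v k
        = a • ((inner ℝ (v k) y : ℝ) • v k) := by
      intro k; rw [real_inner_smul_right]; exact smul_smul a _ (v k) |>.symm
    rw [Finset.sum_congr rfl fun k _ => hterm k, ← Finset.smul_sum, hy]

lemma exists_orthonormal_V {m n r : ℕ} (hrn : r ≤ n) (B : Matrix (Fin m) (Fin n) ℝ)
    (hrank : B.rank ≤ r) :
    ∃ V : Matrix (Fin n) (Fin r) ℝ, Vᵀ * V = 1 ∧ B * (V * Vᵀ) = B := by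
  classical
  set Euc := EuclideanSpace ℝ (Fin n)
  set e : (Fin n → ℝ) ≃ₗ[ℝ] Euc := (WithLp.linearEquiv 2 ℝ (Fin n → ℝ)).symm with he
  set S₀ : Submodule ℝ Euc := Submodule.span ℝ (Set.range fun i => e (B i)) with hS₀
  have hS₀eq : S₀ = Submodule.map (e : (Fin n → ℝ) →ₗ[ℝ] Euc) (Submodule.span ℝ (Set.range B)) := by
    rw [hS₀, Submodule.map_span]
    congr 1
    exact Set.range_comp _ _
  have hfinrank : Module.finrank ℝ S₀ ≤ r := by
    rw [hS₀eq, LinearEquiv.finrank_map_eq]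
    rw [Matrix.rank_eq_finrank_span_row] at hrank
    exact hrank
  set d := Module.finrank ℝ S₀ with hdd
  set b₀ := stdOrthonormalBasis ℝ ↥S₀ with hb₀
  set v : Fin n → Euc := fun i => if h : (i : ℕ) < d then (b₀ ⟨i, h⟩ : Euc) else 0 with hv
  set s : Set (Fin n) := {i | (i : ℕ) < d} with hs
  have horth : Orthonormal ℝ (s.restrict v) := by
    rw [orthonormal_iff_ite]
    rintro ⟨i, hi⟩ ⟨j, hj⟩
    have hii : (i : ℕ) < d := hi
    have hjj : (j : ℕ) < d := hj
    simp only [Set.restrict_apply, hv]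
    change inner ℝ (dite ((i:ℕ) < d) (fun h => (b₀ ⟨i, h⟩ : Euc)) (fun _ => 0))
      (dite ((j:ℕ) < d) (fun h => (b₀ ⟨j, h⟩ : Euc)) (fun _ => 0)) = _
    rw [dif_pos hii, dif_pos hjj]
    have hb := orthonormal_iff_ite.mp b₀.orthonormal ⟨(i : ℕ), hii⟩ ⟨(j : ℕ), hjj⟩
    rw [← Submodule.coe_inner, hb]
    by_cases hij : i = j
    · subst hij; simp
    · have h1 : ¬((⟨(i : ℕ), hii⟩ : Fin d) = ⟨(j : ℕ), hjj⟩) := by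
        intro h
        have hval : ((⟨(i : ℕ), hii⟩ : Fin d) : ℕ) = ((⟨(j : ℕ), hjj⟩ : Fin d) : ℕ) :=
          congrArg Fin.val h
        exact hij (Fin.ext hval)
      have h2 : ¬((⟨i, hi⟩ : s) = ⟨j, hj⟩) := fun h => hij (congrArg Subtype.val h)
      rw [if_neg h1, if_neg h2]
  have hcard : Module.finrank ℝ Euc = Fintype.card (Fin n) := by
    simp [Euc, finrank_euclideanSpace_fin]
  obtain ⟨b, hb⟩ := horth.exists_orthonormalBasis_extension_of_card_eq hcard
  set vr : Fin r → Euc := fun k => b (Fin.castLE hrn k) with hvr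
  have hcastinj : Function.Injective (Fin.castLE hrn) := by
    intro a b' hab
    have : (a : ℕ) = (b' : ℕ) := by
      have := congrArg Fin.val hab
      simpa using this
    exact Fin.ext this
  have hvr_on : Orthonormal ℝ vr := b.orthonormal.comp _ hcastinj
  have hbval : ∀ k : Fin d, (b₀ k : Euc) ∈ Set.range vr := by
    intro k
    have hkr : (k : ℕ) < r := lt_of_lt_of_le k.2 hfinrank
    refine ⟨⟨(k : ℕ), hkr⟩, ?_⟩
    have hin : (Fin.castLE hrn ⟨(k : ℕ), hkr⟩) ∈ s := by
      simp only [hs, Set.mem_setOf_eq]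
      exact k.2
    have hbv := hb _ hin
    show b (Fin.castLE hrn ⟨(k : ℕ), hkr⟩) = _
    rw [hbv]
    simp only [hv]
    rw [dif_pos (show ((Fin.castLE hrn ⟨(k : ℕ), hkr⟩ : Fin n) : ℕ) < d from k.2)]
    congr 1
  have hS₀le : S₀ ≤ Submodule.span ℝ (Set.range vr) := by
    have hspan : S₀ = Submodule.span ℝ (Set.range fun k : Fin d => (b₀ k : Euc)) := by
      conv_lhs => rw [← Submodule.map_subtype_top S₀]
      rw [← b₀.toBasis.span_eq, Submodule.map_span]
      congr 1
      rw [← Set.range_comp]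
      rfl
    rw [hspan]
    refine Submodule.span_le.mpr ?_
    rintro y ⟨k, rfl⟩
    exact Submodule.subset_span (hbval k)
  set V : Matrix (Fin n) (Fin r) ℝ := Matrix.of fun i k => e.symm (vr k) i with hV
  have hinner : ∀ x y : Euc, (inner ℝ x y : ℝ) = ∑ i, e.symm x i * e.symm y i := by
    intro x y
    rw [PiLp.inner_apply]
    refine Finset.sum_congr rfl fun i _ => ?_
    simp [RCLike.inner_apply]
    exact mul_comm _ _
  have hVtV : Vᵀ * V = 1 := by
    ext k l
    rw [Matrix.mul_apply]
    have := orthonormal_iff_ite.mp hvr_on k l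
    rw [hinner] at this
    simp only [Matrix.transpose_apply, hV, Matrix.of_apply]
    rw [this, Matrix.one_apply]
  have hBfix : B * (V * Vᵀ) = B := by
    ext i l
    have hx := span_proj vr hvr_on (e (B i))
      (hS₀le (Submodule.subset_span ⟨i, rfl⟩))
    have hx' := congrFun (congrArg (fun y => (e.symm y : Fin n → ℝ)) hx) l
    simp only [map_sum, _root_.map_smul, Finset.sum_apply, Pi.smul_apply, smul_eq_mul,
      LinearEquiv.symm_apply_apply] at hx'
    rw [Matrix.mul_apply]
    calc (∑ t, B i t * (V * Vᵀ) t l)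
        = ∑ t, B i t * ∑ k, V t k * V l k := by
          refine Finset.sum_congr rfl fun t _ => ?_
          rw [Matrix.mul_apply]
          rfl
      _ = ∑ t, ∑ k, B i t * (V t k * V l k) := by
          refine Finset.sum_congr rfl fun t _ => ?_
          rw [Finset.mul_sum]
      _ = ∑ k, ∑ t, B i t * (V t k * V l k) := Finset.sum_comm
      _ = ∑ k, (inner ℝ (vr k) (e (B i)) : ℝ) * e.symm (vr k) l := by
          refine Finset.sum_congr rfl fun k _ => ?_
          rw [hinner, Finset.sum_mul, LinearEquiv.symm_apply_apply]
          refine Finset.sum_congr rfl fun t _ => ?_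
          simp only [hV, Matrix.of_apply]
          ring
      _ = B i l := hx'
  exact ⟨V, hVtV, hBfix⟩

lemma stiefel_min {m n r : ℕ} (hrn : r ≤ n) (A : Matrix (Fin m) (Fin n) ℝ) :
    ∃ V : Matrix (Fin n) (Fin r) ℝ, Vᵀ * V = 1 ∧
      ∀ W : Matrix (Fin n) (Fin r) ℝ, Wᵀ * W = 1 →
        frobSq (A - A * (V * Vᵀ)) ≤ frobSq (A - A * (W * Wᵀ)) := by
  classical
  set K : Set (Fin n → Fin r → ℝ) :=
    {V | ∀ k l : Fin r, (∑ i, V i k * V i l) = if k = l then (1:ℝ) else 0} with hK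
  have hKiff : ∀ V : Fin n → Fin r → ℝ, V ∈ K ↔ (Matrix.of V)ᵀ * Matrix.of V = 1 := by
    intro V
    constructor
    · intro h
      ext k l
      rw [Matrix.mul_apply, Matrix.one_apply, ← h k l]
      rfl
    · intro h k l
      have := congrFun (congrFun h k) l
      rw [Matrix.mul_apply, Matrix.one_apply] at this
      rw [← this]
      rfl
  have hsumcont : ∀ k l : Fin r, Continuous fun V : Fin n → Fin r → ℝ => ∑ i, V i k * V i l := by
    intro k l
    refine continuous_finset_sum _ fun i _ => ?_
    exact Continuous.mul (f := fun V : Fin n → Fin r → ℝ => V i k)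
      (g := fun V : Fin n → Fin r → ℝ => V i l) ((continuous_apply k).comp (continuous_apply i))
      ((continuous_apply l).comp (continuous_apply i))
  have hKclosed : IsClosed K := by
    have hrepr : K = ⋂ (k : Fin r), ⋂ (l : Fin r),
        {V : Fin n → Fin r → ℝ | (∑ i, V i k * V i l) = if k = l then (1:ℝ) else 0} := by
      ext V
      simp [hK, Set.mem_iInter]
    rw [hrepr]
    exact isClosed_iInter fun k => isClosed_iInter fun l =>
      isClosed_eq (hsumcont k l) continuous_const
  have hKsub : K ⊆ Set.univ.pi fun _ : Fin n => Set.univ.pi fun _ : Fin r => Set.Icc (-1:ℝ) 1 := by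
    intro V hV
    rw [Set.mem_univ_pi]
    intro i
    rw [Set.mem_univ_pi]
    intro k
    have h1 := hV k k
    rw [if_pos rfl] at h1
    have hle : V i k * V i k ≤ 1 := by
      rw [← h1]
      exact Finset.single_le_sum (fun j _ => mul_self_nonneg (V j k)) (Finset.mem_univ i)
    constructor <;> nlinarith
  have hKcomp : IsCompact K := IsCompact.of_isClosed_subset
    (isCompact_univ_pi fun _ => isCompact_univ_pi fun _ => isCompact_Icc) hKclosed hKsub
  have hKne : K.Nonempty := by
    refine ⟨fun i k => if (i : ℕ) = (k : ℕ) then (1:ℝ) else 0, ?_⟩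
    intro k l
    have hre : ∀ (k' : Fin r) (i : Fin n),
        (if (i : ℕ) = ((k' : Fin r) : ℕ) then (1:ℝ) else 0)
          = if i = Fin.castLE hrn k' then 1 else 0 := by
      intro k' i
      refine if_congr ⟨fun h => Fin.ext h, fun h => congrArg Fin.val h⟩ rfl rfl
    simp only [hre]
    rw [Finset.sum_eq_single (Fin.castLE hrn k)]
    · rw [if_pos rfl, one_mul]
      refine if_congr ?_ rfl rfl
      constructor
      · intro h
        have := congrArg Fin.val h
        exact Fin.ext (by simpa using this)
      · intro h
        exact congrArg _ h
    · intro i _ hi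
      rw [if_neg hi, zero_mul]
    · intro h
      exact absurd (Finset.mem_univ _) h
  set f : (Fin n → Fin r → ℝ) → ℝ :=
    fun V => frobSq (A - A * (Matrix.of V * (Matrix.of V)ᵀ)) with hf
  have hfc : Continuous f := by
    have hM : Continuous fun V : Fin n → Fin r → ℝ => Matrix.of V := continuous_id
    have h1 : Continuous fun V : Fin n → Fin r → ℝ =>
        A - A * (Matrix.of V * (Matrix.of V)ᵀ) :=
      continuous_const.sub (continuous_const.matrix_mul (hM.matrix_mul hM.matrix_transpose))
    have h2 : Continuous fun M : Matrix (Fin m) (Fin n) ℝ => frobSq M := by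
      unfold frobSq
      refine continuous_finset_sum _ fun i _ => continuous_finset_sum _ fun j _ => ?_
      exact ((continuous_apply j).comp (continuous_apply i)).pow 2
    exact h2.comp h1
  obtain ⟨V, hVK, hmin⟩ := hKcomp.exists_isMinOn hKne hfc.continuousOn
  refine ⟨Matrix.of V, (hKiff V).mp hVK, ?_⟩
  intro W hW
  have hWK : (fun i k => W i k) ∈ K := (hKiff _).mpr (by
    convert hW using 2 <;> rfl)
  exact hmin hWK

/-- quasi-optimal column subset selection: there exist `r` distinct
columns of `A` and a coefficient matrix `C` such that `‖A − A E_J C‖_F²` is within a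
factor `r+1` of every rank-`r` approximation error. -/
theorem quasi_optimal_cssp {m n r : ℕ} (hr : 0 < r) (hrm : r ≤ m) (hrn : r ≤ n)
    (A : Matrix (Fin m) (Fin n) ℝ) :
    ∃ j : Fin r → Fin n, Function.Injective j ∧
      ∃ C : Matrix (Fin r) (Fin n) ℝ,
        ∀ B : Matrix (Fin m) (Fin n) ℝ, B.rank ≤ r →
          frobSq (A - A * EJ j * C) ≤ ((r : ℝ) + 1) * frobSq (A - B) := by
  obtain ⟨V, hV, hmin⟩ := stiefel_min hrn A
  obtain ⟨g, hinj, C, hC⟩ := column_select A V hV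
  refine ⟨g, hinj, C, fun B hB => ?_⟩
  obtain ⟨W, hW, hWfix⟩ := exists_orthonormal_V hrn B hB
  have hQt : (1 - W * Wᵀ)ᵀ = 1 - W * Wᵀ := by
    rw [Matrix.transpose_sub, Matrix.transpose_one, Matrix.transpose_mul,
      Matrix.transpose_transpose]
  have hQQ : (1 - W * Wᵀ) * (1 - W * Wᵀ) = 1 - W * Wᵀ := by
    have hPP : (W * Wᵀ) * (W * Wᵀ) = W * Wᵀ := by
      rw [Matrix.mul_assoc, ← Matrix.mul_assoc Wᵀ W Wᵀ, hW, Matrix.one_mul]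
    simp [Matrix.mul_sub, Matrix.sub_mul, hPP]
  have hP : (A - B) * (1 - W * Wᵀ) = A - A * (W * Wᵀ) := by
    rw [Matrix.sub_mul, Matrix.mul_sub, Matrix.mul_sub, Matrix.mul_one, Matrix.mul_one, hWfix]
    abel
  have h1 : frobSq (A - A * (W * Wᵀ)) ≤ frobSq (A - B) := by
    rw [← hP]
    exact proj_contract _ _ hQt hQQ
  have h2 := hmin W hW
  have h3 : (0:ℝ) ≤ (r : ℝ) + 1 := by positivity
  calc frobSq (A - A * EJ g * C) ≤ ((r : ℝ) + 1) * frobSq (A - A * (V * Vᵀ)) := hC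
    _ ≤ ((r : ℝ) + 1) * frobSq (A - B) := by
        apply mul_le_mul_of_nonneg_left _ h3
        linarith
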